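/- Define ρ(t) := (1/π)√((2−t)/t) for t ∈ (0,2). Then ρ is a probability density on (0,2) (i.e., ∫₀² ρ(t) dt = 1), and there exists a constant C such that ∫₀² (−log|t−s|) ρ(s) ds + t = C for all t ∈ (0,2). -/

import Mathlib

open Real MeasureTheory intervalIntegral Set

section Helpers
open Filter

lemma integrableOn_log_Ioc {b : ℝ} (hb : 1 ≤ b) : IntegrableOn Real.log (Set.Ioc 0 b) := by
  have hb0 : (0:ℝ) < b := lt_of_lt_of_le one_pos hb
  have key : ∀ n : ℕ, (0:ℝ) < 1/(n+2) ∧ (1:ℝ)/(n+2) ≤ 1 := by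
    intro n
    constructor
    · positivity
    · rw [div_le_one (by positivity)]; linarith [Nat.cast_nonneg (α := ℝ) n]
  apply integrableOn_Ioc_of_intervalIntegral_norm_bounded_left
    (a := fun n : ℕ => 1/((n:ℝ)+2)) (I := b * Real.log b + b + 1) (l := atTop)
  · intro n
    obtain ⟨h1, h2⟩ := key n
    refine (intervalIntegrable_iff_integrableOn_Ioc_of_le (by linarith)).1 ?_
    apply intervalIntegrable_log
    rw [Set.uIcc_of_le (by linarith)]
    rintro ⟨h3, -⟩; linarith
  · have h1 : Tendsto (fun n : ℕ => ((n:ℝ)+2)) atTop atTop :=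
      tendsto_atTop_add_const_right _ _ tendsto_natCast_atTop_atTop
    exact h1.inv_tendsto_atTop.congr (fun n => by simp [one_div])
  · filter_upwards with n
    obtain ⟨h1, h2⟩ := key n
    set a := (1:ℝ)/((n:ℝ)+2) with ha
    have hb0' : 0 ≤ Real.log b := Real.log_nonneg hb
    have hab : a ≤ b := by linarith
    have hmem : (0:ℝ) ∉ Set.uIcc a b := by
      rw [Set.uIcc_of_le hab]; rintro ⟨h3, -⟩; linarith
    have hil : IntervalIntegrable Real.log volume a b := intervalIntegrable_log hmem
    have h3 : ∫ x in Set.Ioc a b, ‖Real.log x‖ = ∫ x in a..b, ‖Real.log x‖ := by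
      rw [intervalIntegral.integral_of_le hab]
    rw [h3]
    have hmono : ∫ x in a..b, ‖Real.log x‖ ≤ ∫ x in a..b, (2 * Real.log b - Real.log x) := by
      apply intervalIntegral.integral_mono_on hab hil.norm
        (intervalIntegrable_const.sub hil)
      intro x ⟨hx1, hx2⟩
      have hx0 : 0 < x := lt_of_lt_of_le h1 hx1
      have hlb : Real.log x ≤ Real.log b := Real.log_le_log hx0 hx2
      rw [Real.norm_eq_abs]
      rcases le_total x 1 with h | h
      · rw [abs_of_nonpos (Real.log_nonpos (le_of_lt hx0) h)]; linarith
      · rw [abs_of_nonneg (Real.log_nonneg h)]; linarith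
    have hval : ∫ x in a..b, (2 * Real.log b - Real.log x)
        = 2 * Real.log b * (b - a) - (b * Real.log b - a * Real.log a - b + a) := by
      rw [intervalIntegral.integral_sub intervalIntegrable_const hil,
        intervalIntegral.integral_const, integral_log]
      simp [smul_eq_mul]; ring
    have hala : a * Real.log a ≤ 0 :=
      mul_nonpos_of_nonneg_of_nonpos (le_of_lt h1) (Real.log_nonpos (le_of_lt h1) h2)
    have halb : 0 ≤ a * Real.log b := mul_nonneg (le_of_lt h1) hb0'
    calc ∫ x in a..b, ‖Real.log x‖ ≤ _ := hmono
      _ ≤ b * Real.log b + b + 1 := by rw [hval]; nlinarith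

lemma ii_log_sin_half : IntervalIntegrable (fun x => Real.log (Real.sin x)) volume 0 (π/2) := by
  rw [intervalIntegrable_iff_integrableOn_Ioc_of_le Real.pi_div_two_pos.le]
  have hlog : IntegrableOn Real.log (Set.Ioc 0 (π/2)) := integrableOn_log_Ioc Real.one_le_pi_div_two
  apply Integrable.mono' ((integrable_const (-Real.log (2/π))).sub hlog)
  · exact (Real.measurable_log.comp Real.measurable_sin).aestronglyMeasurable
  · rw [ae_restrict_iff' measurableSet_Ioc]
    filter_upwards with x hx
    obtain ⟨hx0, hx2⟩ := hx
    have hsin : 2/π * x ≤ Real.sin x := Real.mul_le_sin hx0.le hx2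
    have hpos : (0:ℝ) < 2/π * x := by positivity
    have hsinpos : 0 < Real.sin x := lt_of_lt_of_le hpos hsin
    have h1 : Real.log (Real.sin x) ≤ 0 := Real.log_nonpos hsinpos.le (Real.sin_le_one x)
    have h2 : Real.log (2/π * x) ≤ Real.log (Real.sin x) := Real.log_le_log hpos hsin
    rw [Real.log_mul (by positivity) (ne_of_gt hx0)] at h2
    rw [Real.norm_eq_abs, abs_of_nonpos h1]
    simp only [Pi.sub_apply]
    linarith

lemma ii_log_sin_half2 : IntervalIntegrable (fun x => Real.log (Real.sin x)) volume (π/2) π := by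
  have h := (ii_log_sin_half.comp_sub_left π).symm
  simp only [Real.sin_pi_sub, sub_zero, sub_self] at h
  rw [show π - π/2 = π/2 by ring] at h
  exact h

lemma ii_log_sin_pi : IntervalIntegrable (fun x => Real.log (Real.sin x)) volume 0 π :=
  ii_log_sin_half.trans ii_log_sin_half2

lemma ii_log_sin_full : IntervalIntegrable (fun x => Real.log (Real.sin x)) volume (-π) π := by
  have h := ((IntervalIntegrable.iff_comp_neg).mp ii_log_sin_pi).symm
  simp only [Real.sin_neg, Real.log_neg_eq_log, neg_zero, neg_neg] at h
  exact h.trans ii_log_sin_pi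

lemma ii_log_sin {a b : ℝ} (h : Set.uIcc a b ⊆ Set.uIcc (-π) π) :
    IntervalIntegrable (fun x => Real.log (Real.sin x)) volume a b :=
  ii_log_sin_full.mono_set h

lemma ii_log_cos_half : IntervalIntegrable (fun x => Real.log (Real.cos x)) volume 0 (π/2) := by
  have h := (ii_log_sin_half.comp_sub_left (π/2)).symm
  simp only [Real.sin_pi_div_two_sub, sub_zero, sub_self] at h
  exact h

lemma J_eq : ∫ x in (π/2)..π, Real.log (Real.sin x) = ∫ x in (0:ℝ)..(π/2), Real.log (Real.sin x) := by
  have h := intervalIntegral.integral_comp_sub_left (fun x => Real.log (Real.sin x)) π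
    (a := 0) (b := π/2)
  simp only [Real.sin_pi_sub, sub_zero] at h
  rw [show π - π/2 = π/2 by ring] at h
  exact h.symm

lemma integral_log_sin_pi : ∫ x in (0:ℝ)..π, Real.log (Real.sin x) = -π * Real.log 2 := by
  set I := ∫ x in (0:ℝ)..π, Real.log (Real.sin x) with hI
  set J := ∫ x in (0:ℝ)..(π/2), Real.log (Real.sin x) with hJ
  have hsplit : I = J + J := by
    rw [hI, hJ, ← intervalIntegral.integral_add_adjacent_intervals ii_log_sin_half ii_log_sin_half2,
      J_eq]
  have hdouble : ∫ u in (0:ℝ)..(π/2), Real.log (Real.sin (2*u)) = 2⁻¹ * I := by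
    have h := intervalIntegral.integral_comp_mul_left (fun x => Real.log (Real.sin x))
      (a := 0) (b := π/2) (c := 2) two_ne_zero
    rw [h, show (2:ℝ)*0 = 0 by ring, show (2:ℝ)*(π/2) = π by ring, smul_eq_mul]
  have hae : ∀ᵐ x : ℝ, x ≠ π/2 := by
    have h0 : volume ({π/2} : Set ℝ) = 0 := Real.volume_singleton
    have := measure_eq_zero_iff_ae_notMem.mp h0
    simpa using this
  have hcongr : ∫ u in (0:ℝ)..(π/2), Real.log (Real.sin (2*u))
      = ∫ u in (0:ℝ)..(π/2), (Real.log 2 + Real.log (Real.sin u) + Real.log (Real.cos u)) := by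
    apply intervalIntegral.integral_congr_ae
    filter_upwards [hae] with u hu hmem
    rw [Set.uIoc_of_le Real.pi_div_two_pos.le] at hmem
    obtain ⟨h1, h2⟩ := hmem
    have h2' : u < π/2 := lt_of_le_of_ne h2 hu
    have hs : 0 < Real.sin u := Real.sin_pos_of_pos_of_lt_pi h1 (by linarith [Real.pi_pos])
    have hc : 0 < Real.cos u := Real.cos_pos_of_mem_Ioo ⟨by linarith, h2'⟩
    rw [Real.sin_two_mul, Real.log_mul (by positivity) (ne_of_gt hc),
      Real.log_mul two_ne_zero (ne_of_gt hs)]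
    try ring
  have hJcos : ∫ u in (0:ℝ)..(π/2), Real.log (Real.cos u) = J := by
    have h := intervalIntegral.integral_comp_sub_left (fun x => Real.log (Real.sin x)) (π/2)
      (a := 0) (b := π/2)
    simp only [Real.sin_pi_div_two_sub, sub_zero, sub_self] at h
    rw [h, hJ]
  have hval : ∫ u in (0:ℝ)..(π/2), (Real.log 2 + Real.log (Real.sin u) + Real.log (Real.cos u))
      = π/2 * Real.log 2 + J + J := by
    rw [intervalIntegral.integral_add (intervalIntegrable_const.add ii_log_sin_half) ii_log_cos_half,
      intervalIntegral.integral_add intervalIntegrable_const ii_log_sin_half,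
      intervalIntegral.integral_const, hJcos]
    simp [smul_eq_mul]
    exact hJ.symm
  have : 2⁻¹ * I = π/2 * Real.log 2 + I := by
    rw [← hdouble, hcongr, hval, hsplit]; ring
  linarith

lemma ae_ne (c : ℝ) : ∀ᵐ x : ℝ, x ≠ c := by
  have h0 : volume ({c} : Set ℝ) = 0 := Real.volume_singleton
  have := measure_eq_zero_iff_ae_notMem.mp h0
  simpa using this

lemma uIcc_pi_sub {a b : ℝ} (h1 : -π ≤ a) (h2 : a ≤ π) (h3 : -π ≤ b) (h4 : b ≤ π) :
    Set.uIcc a b ⊆ Set.uIcc (-π) π := by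
  apply Set.uIcc_subset_uIcc <;> rw [Set.uIcc_of_le (by linarith [Real.pi_pos] : -π ≤ π)] <;>
    exact ⟨by linarith, by linarith⟩

lemma ii_log_sin_affine {a b c : ℝ}
    (h : Set.uIcc ((a+c)/2) ((b+c)/2) ⊆ Set.uIcc (-π) π) :
    IntervalIntegrable (fun θ => Real.log (Real.sin ((θ+c)/2))) volume a b := by
  have h1 := (ii_log_sin h).comp_mul_right (c := 2⁻¹)
  have h2 := h1.comp_add_right c
  have e1 : (a+c)/2/2⁻¹ - c = a := by field_simp; ring
  have e2 : (b+c)/2/2⁻¹ - c = b := by field_simp; ring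
  rw [e1, e2] at h2
  simp only [div_eq_mul_inv]
  exact h2

lemma decomp {φ θ : ℝ} (hφ : φ ∈ Set.Ioo 0 π) (hθ : θ ∈ Set.Icc 0 π) (hne : θ ≠ φ) :
    Real.log |Real.cos θ - Real.cos φ|
      = Real.log 2 + Real.log (Real.sin ((θ+φ)/2)) + Real.log (Real.sin ((θ-φ)/2)) := by
  obtain ⟨hφ0, hφπ⟩ := hφ
  obtain ⟨hθ0, hθπ⟩ := hθ
  have hπ := Real.pi_pos
  have hsp : 0 < Real.sin ((θ+φ)/2) :=
    Real.sin_pos_of_pos_of_lt_pi (by linarith) (by linarith)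
  have hsm : Real.sin ((θ-φ)/2) ≠ 0 := by
    rw [Ne, Real.sin_eq_zero_iff_of_lt_of_lt (by linarith) (by linarith)]
    intro hc
    apply hne
    linarith [hc]
  have hcc : Real.cos θ - Real.cos φ = -2 * Real.sin ((θ+φ)/2) * Real.sin ((θ-φ)/2) :=
    Real.cos_sub_cos θ φ
  rw [hcc]
  rw [abs_mul, abs_mul]
  rw [Real.log_mul (by positivity) (abs_ne_zero.mpr hsm),
    Real.log_mul (by norm_num) (abs_ne_zero.mpr (ne_of_gt hsp))]
  rw [Real.log_abs, Real.log_abs]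
  norm_num

lemma intA {φ : ℝ} (hφ : φ ∈ Set.Ioo 0 π) :
    ∫ θ in (0:ℝ)..π, Real.log |Real.cos θ - Real.cos φ| = -π * Real.log 2 := by
  obtain ⟨hφ0, hφπ⟩ := hφ
  have hπ := Real.pi_pos
  have iiP : IntervalIntegrable (fun θ => Real.log (Real.sin ((θ+φ)/2))) volume 0 π :=
    ii_log_sin_affine (uIcc_pi_sub (by linarith) (by linarith) (by linarith) (by linarith))
  have iiM : IntervalIntegrable (fun θ => Real.log (Real.sin ((θ-φ)/2))) volume 0 π := by
    have := ii_log_sin_affine (a := 0) (b := π) (c := -φ)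
      (uIcc_pi_sub (by linarith) (by linarith) (by linarith) (by linarith))
    simpa [sub_eq_add_neg] using this
  have h1 : ∫ θ in (0:ℝ)..π, Real.log |Real.cos θ - Real.cos φ|
      = ∫ θ in (0:ℝ)..π,
        (Real.log 2 + Real.log (Real.sin ((θ+φ)/2)) + Real.log (Real.sin ((θ-φ)/2))) := by
    apply intervalIntegral.integral_congr_ae
    filter_upwards [ae_ne φ] with θ hθ hmem
    rw [Set.uIoc_of_le hπ.le] at hmem
    exact decomp ⟨hφ0, hφπ⟩ ⟨hmem.1.le, hmem.2⟩ hθ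
  have hsplit : ∫ θ in (0:ℝ)..π,
        (Real.log 2 + Real.log (Real.sin ((θ+φ)/2)) + Real.log (Real.sin ((θ-φ)/2)))
      = π * Real.log 2 + (∫ θ in (0:ℝ)..π, Real.log (Real.sin ((θ+φ)/2)))
        + ∫ θ in (0:ℝ)..π, Real.log (Real.sin ((θ-φ)/2)) := by
    rw [intervalIntegral.integral_add (intervalIntegrable_const.add iiP) iiM,
      intervalIntegral.integral_add intervalIntegrable_const iiP,
      intervalIntegral.integral_const]
    simp [smul_eq_mul]
  -- P
  have hP : ∫ θ in (0:ℝ)..π, Real.log (Real.sin ((θ+φ)/2))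
      = 2 * ∫ u in (φ/2)..((π+φ)/2), Real.log (Real.sin u) := by
    have e1 := intervalIntegral.integral_comp_add_right (a := (0:ℝ)) (b := π)
      (fun x => Real.log (Real.sin (x/2))) φ
    have e2 := intervalIntegral.integral_comp_div (a := φ) (b := π+φ)
      (fun x => Real.log (Real.sin x)) (two_ne_zero)
    simp only [zero_add] at e1
    rw [e1, e2, smul_eq_mul]
  -- M
  have hM : ∫ θ in (0:ℝ)..π, Real.log (Real.sin ((θ-φ)/2))
      = 2 * ∫ u in (-(φ/2))..((π-φ)/2), Real.log (Real.sin u) := by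
    have e1 := intervalIntegral.integral_comp_sub_right (a := (0:ℝ)) (b := π)
      (fun x => Real.log (Real.sin (x/2))) φ
    have e2 := intervalIntegral.integral_comp_div (a := -φ) (b := π-φ)
      (fun x => Real.log (Real.sin x)) (two_ne_zero)
    simp only [zero_sub] at e1
    rw [e1, e2, smul_eq_mul, neg_div]
  -- reassemble pieces
  have i1 : IntervalIntegrable (fun x => Real.log (Real.sin x)) volume (-(φ/2)) 0 :=
    ii_log_sin (uIcc_pi_sub (by linarith) (by linarith) (by linarith) (by linarith))
  have i2 : IntervalIntegrable (fun x => Real.log (Real.sin x)) volume 0 ((π-φ)/2) :=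
    ii_log_sin (uIcc_pi_sub (by linarith) (by linarith) (by linarith) (by linarith))
  have i3 : IntervalIntegrable (fun x => Real.log (Real.sin x)) volume 0 (φ/2) :=
    ii_log_sin (uIcc_pi_sub (by linarith) (by linarith) (by linarith) (by linarith))
  have i4 : IntervalIntegrable (fun x => Real.log (Real.sin x)) volume (φ/2) ((π+φ)/2) :=
    ii_log_sin (uIcc_pi_sub (by linarith) (by linarith) (by linarith) (by linarith))
  have i5 : IntervalIntegrable (fun x => Real.log (Real.sin x)) volume ((π+φ)/2) π :=
    ii_log_sin (uIcc_pi_sub (by linarith) (by linarith) (by linarith) (by linarith))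
  have e1 : ∫ x in (-(φ/2))..(0:ℝ), Real.log (Real.sin x)
      = ∫ x in (0:ℝ)..(φ/2), Real.log (Real.sin x) := by
    have := intervalIntegral.integral_comp_neg (a := (0:ℝ)) (b := φ/2)
      (fun x => Real.log (Real.sin x))
    simp only [Real.sin_neg, Real.log_neg_eq_log, neg_zero] at this
    rw [← this]
  have e2 : ∫ x in (0:ℝ)..((π-φ)/2), Real.log (Real.sin x)
      = ∫ x in ((π+φ)/2)..π, Real.log (Real.sin x) := by
    have := intervalIntegral.integral_comp_sub_left (a := ((π+φ)/2)) (b := π)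
      (fun x => Real.log (Real.sin x)) π
    simp only [Real.sin_pi_sub, sub_self] at this
    rw [show π - (π+φ)/2 = (π-φ)/2 by ring] at this
    rw [← this]
  have hMsplit : ∫ u in (-(φ/2))..((π-φ)/2), Real.log (Real.sin u)
      = (∫ x in (0:ℝ)..(φ/2), Real.log (Real.sin x))
        + ∫ x in ((π+φ)/2)..π, Real.log (Real.sin x) := by
    rw [← intervalIntegral.integral_add_adjacent_intervals i1 i2, e1, e2]
  have hfull : (∫ x in (0:ℝ)..(φ/2), Real.log (Real.sin x))
      + (∫ u in (φ/2)..((π+φ)/2), Real.log (Real.sin u))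
      + (∫ x in ((π+φ)/2)..π, Real.log (Real.sin x)) = -π * Real.log 2 := by
    rw [intervalIntegral.integral_add_adjacent_intervals i3 i4,
      intervalIntegral.integral_add_adjacent_intervals (i3.trans i4) i5]
    exact integral_log_sin_pi
  rw [h1, hsplit, hP, hM, hMsplit]
  linarith [hfull]

noncomputable def Gaux (φ θ : ℝ) : ℝ :=
  Real.log 2 * Real.sin θ + (Real.sin θ + Real.sin φ) * Real.log (Real.sin ((θ+φ)/2))
    + 2 * Real.cos ((θ+φ)/2) * (Real.sin ((θ-φ)/2) * Real.log (Real.sin ((θ-φ)/2)))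
    - Real.sin θ - Real.cos φ * θ

lemma Gderiv {φ θ : ℝ} (hφ : φ ∈ Set.Ioo 0 π) (hθ : θ ∈ Set.Ioo 0 π) (hne : θ ≠ φ) :
    HasDerivAt (Gaux φ) (Real.log |Real.cos θ - Real.cos φ| * Real.cos θ) θ := by
  obtain ⟨hφ0, hφπ⟩ := hφ
  obtain ⟨hθ0, hθπ⟩ := hθ
  have hπ := Real.pi_pos
  set v := (θ+φ)/2 with hv
  set u := (θ-φ)/2 with hu
  have hsv : Real.sin v ≠ 0 :=
    ne_of_gt (Real.sin_pos_of_pos_of_lt_pi (by rw [hv]; linarith) (by rw [hv]; linarith))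
  have hsu : Real.sin u ≠ 0 := by
    rw [Ne, Real.sin_eq_zero_iff_of_lt_of_lt (by rw [hu]; linarith) (by rw [hu]; linarith)]
    intro hc; apply hne; rw [hu] at hc; linarith
  -- derivative building blocks
  have haffv : HasDerivAt (fun θ : ℝ => (θ+φ)/2) (1/2) θ := by
    simpa using ((hasDerivAt_id θ).add_const φ).div_const 2
  have haffu : HasDerivAt (fun θ : ℝ => (θ-φ)/2) (1/2) θ := by
    simpa using ((hasDerivAt_id θ).sub_const φ).div_const 2
  have hsinv : HasDerivAt (fun θ : ℝ => Real.sin ((θ+φ)/2)) (Real.cos v * (1/2)) θ :=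
    by have := (Real.hasDerivAt_sin v).comp θ haffv; exact this
  have hcosv : HasDerivAt (fun θ : ℝ => Real.cos ((θ+φ)/2)) (-Real.sin v * (1/2)) θ :=
    by have := (Real.hasDerivAt_cos v).comp θ haffv; exact this
  have hsinu : HasDerivAt (fun θ : ℝ => Real.sin ((θ-φ)/2)) (Real.cos u * (1/2)) θ :=
    by have := (Real.hasDerivAt_sin u).comp θ haffu; exact this
  have hlogv : HasDerivAt (fun θ : ℝ => Real.log (Real.sin ((θ+φ)/2)))
      ((Real.sin v)⁻¹ * (Real.cos v * (1/2))) θ :=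
    by have := (Real.hasDerivAt_log hsv).comp θ hsinv; exact this
  have hlogu : HasDerivAt (fun θ : ℝ => Real.log (Real.sin ((θ-φ)/2)))
      ((Real.sin u)⁻¹ * (Real.cos u * (1/2))) θ :=
    by have := (Real.hasDerivAt_log hsu).comp θ hsinu; exact this
  have T1 : HasDerivAt (fun θ : ℝ => Real.log 2 * Real.sin θ) (Real.log 2 * Real.cos θ) θ :=
    (Real.hasDerivAt_sin θ).const_mul (Real.log 2)
  have T2 : HasDerivAt (fun θ : ℝ => (Real.sin θ + Real.sin φ) * Real.log (Real.sin ((θ+φ)/2)))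
      (Real.cos θ * Real.log (Real.sin v)
        + (Real.sin θ + Real.sin φ) * ((Real.sin v)⁻¹ * (Real.cos v * (1/2)))) θ :=
    ((Real.hasDerivAt_sin θ).add_const (Real.sin φ)).mul hlogv
  have Tmul : HasDerivAt (fun θ : ℝ => Real.sin ((θ-φ)/2) * Real.log (Real.sin ((θ-φ)/2)))
      ((Real.cos u * (1/2)) * Real.log (Real.sin u)
        + Real.sin u * ((Real.sin u)⁻¹ * (Real.cos u * (1/2)))) θ :=
    hsinu.mul hlogu
  have T3 : HasDerivAt
      (fun θ : ℝ => 2 * Real.cos ((θ+φ)/2) * (Real.sin ((θ-φ)/2) * Real.log (Real.sin ((θ-φ)/2))))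
      ((2 * (-Real.sin v * (1/2))) * (Real.sin u * Real.log (Real.sin u))
        + (2 * Real.cos v) * ((Real.cos u * (1/2)) * Real.log (Real.sin u)
          + Real.sin u * ((Real.sin u)⁻¹ * (Real.cos u * (1/2))))) θ :=
    (hcosv.const_mul 2).mul Tmul
  have T5 : HasDerivAt (fun θ : ℝ => Real.cos φ * θ) (Real.cos φ * 1) θ :=
    (hasDerivAt_id θ).const_mul (Real.cos φ)
  have TT := ((T1.add T2).add T3).sub (Real.hasDerivAt_sin θ) |>.sub T5
  refine TT.congr_deriv ?_
  -- now the algebraic identity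
  rw [decomp ⟨hφ0, hφπ⟩ ⟨hθ0.le, hθπ.le⟩ hne]
  have hsinadd : Real.sin θ + Real.sin φ = 2 * Real.sin v * Real.cos u := by
    have := Real.sin_sub_sin θ (-φ)
    simp only [Real.sin_neg, sub_neg_eq_add, ← sub_eq_add_neg] at this
    exact this
  have hcosθ : Real.cos θ = Real.cos v * Real.cos u - Real.sin v * Real.sin u := by
    have := Real.cos_add v u
    rw [show v + u = θ by rw [hv, hu]; ring] at this
    exact this
  have hcosφ : Real.cos φ = Real.cos v * Real.cos u + Real.sin v * Real.sin u := by
    have := Real.cos_sub v u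
    rw [show v - u = φ by rw [hv, hu]; ring] at this
    exact this
  rw [hsinadd, hcosθ, hcosφ]
  field_simp
  ring



lemma Gcont {φ : ℝ} (hφ : φ ∈ Set.Ioo 0 π) : ContinuousOn (Gaux φ) (Set.Icc 0 π) := by
  obtain ⟨hφ0, hφπ⟩ := hφ
  have hπ := Real.pi_pos
  unfold Gaux
  apply ContinuousOn.sub
  apply ContinuousOn.sub
  apply ContinuousOn.add
  apply ContinuousOn.add
  · exact (continuous_const.mul Real.continuous_sin).continuousOn
  · apply ContinuousOn.mul
    · exact (Real.continuous_sin.add continuous_const).continuousOn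
    · apply ContinuousOn.log
      · exact (Real.continuous_sin.comp (by continuity)).continuousOn
      · intro θ hθ
        obtain ⟨h1, h2⟩ := hθ
        exact ne_of_gt (Real.sin_pos_of_pos_of_lt_pi (by linarith) (by linarith))
  · have : Continuous fun θ : ℝ =>
        2 * Real.cos ((θ+φ)/2) * (Real.sin ((θ-φ)/2) * Real.log (Real.sin ((θ-φ)/2))) := by
      apply Continuous.mul
      · exact continuous_const.mul (Real.continuous_cos.comp (by continuity))
      · exact Real.continuous_mul_log.comp (Real.continuous_sin.comp (by continuity))
    exact this.continuousOn
  · exact Real.continuous_sin.continuousOn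
  · exact (continuous_const.mul continuous_id).continuousOn

lemma Gval0 {φ : ℝ} : Gaux φ 0 = 0 := by
  unfold Gaux
  rw [show ((0:ℝ)-φ)/2 = -(φ/2) by ring, show ((0:ℝ)+φ)/2 = φ/2 by ring]
  have hs : Real.sin φ = 2 * Real.sin (φ/2) * Real.cos (φ/2) := by
    rw [← Real.sin_two_mul]; ring_nf
  rw [Real.sin_neg, Real.log_neg_eq_log, Real.sin_zero, hs]
  ring

lemma Gvalpi {φ : ℝ} : Gaux φ π = -π * Real.cos φ := by
  unfold Gaux
  rw [show (π+φ)/2 = π/2 + φ/2 by ring, show (π-φ)/2 = π/2 - φ/2 by ring]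
  have h1 : Real.sin (π/2 + φ/2) = Real.cos (φ/2) := by
    rw [Real.sin_add]; simp
  have h2 : Real.cos (π/2 + φ/2) = -Real.sin (φ/2) := by
    rw [Real.cos_add]; simp
  have h3 : Real.sin (π/2 - φ/2) = Real.cos (φ/2) := Real.sin_pi_div_two_sub _
  have hs : Real.sin φ = 2 * Real.sin (φ/2) * Real.cos (φ/2) := by
    rw [← Real.sin_two_mul]; ring_nf
  rw [h1, h2, h3, Real.sin_pi, hs]
  ring



lemma iiA {φ : ℝ} (hφ : φ ∈ Set.Ioo 0 π) :
    IntervalIntegrable (fun θ => Real.log |Real.cos θ - Real.cos φ|) volume 0 π := by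
  obtain ⟨hφ0, hφπ⟩ := hφ
  have hπ := Real.pi_pos
  have iiP : IntervalIntegrable (fun θ => Real.log (Real.sin ((θ+φ)/2))) volume 0 π :=
    ii_log_sin_affine (uIcc_pi_sub (by linarith) (by linarith) (by linarith) (by linarith))
  have iiM : IntervalIntegrable (fun θ => Real.log (Real.sin ((θ-φ)/2))) volume 0 π := by
    have := ii_log_sin_affine (a := 0) (b := π) (c := -φ)
      (uIcc_pi_sub (by linarith) (by linarith) (by linarith) (by linarith))
    simpa [sub_eq_add_neg] using this
  have base := (_root_.intervalIntegrable_const (c := Real.log 2) (μ := volume) (a := 0) (b := π)).add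
    iiP |>.add iiM
  rw [intervalIntegrable_iff_integrableOn_Ioc_of_le hπ.le] at base ⊢
  apply base.congr
  rw [Filter.EventuallyEq, ae_restrict_iff' measurableSet_Ioc]
  filter_upwards [ae_ne φ] with θ hθ hmem
  exact (decomp ⟨hφ0, hφπ⟩ ⟨hmem.1.le, hmem.2⟩ hθ).symm

lemma intB {φ : ℝ} (hφ : φ ∈ Set.Ioo 0 π) :
    ∫ θ in (0:ℝ)..π, Real.log |Real.cos θ - Real.cos φ| * Real.cos θ = -π * Real.cos φ := by
  obtain ⟨hφ0, hφπ⟩ := hφ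
  have hπ := Real.pi_pos
  have iiB : IntervalIntegrable (fun θ => Real.log |Real.cos θ - Real.cos φ| * Real.cos θ)
      volume 0 π := (iiA ⟨hφ0, hφπ⟩).mul_continuousOn Real.continuous_cos.continuousOn
  have iiB1 := iiB.mono_set (by
    rw [Set.uIcc_of_le hφ0.le, Set.uIcc_of_le hπ.le]
    exact Set.Icc_subset_Icc le_rfl hφπ.le)
  have iiB2 := iiB.mono_set (by
    rw [Set.uIcc_of_le hφπ.le, Set.uIcc_of_le hπ.le]
    exact Set.Icc_subset_Icc hφ0.le le_rfl)
  have hI1 : ∫ θ in (0:ℝ)..φ, Real.log |Real.cos θ - Real.cos φ| * Real.cos θ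
      = Gaux φ φ - Gaux φ 0 := by
    apply intervalIntegral.integral_eq_sub_of_hasDeriv_right_of_le hφ0.le
      ((Gcont ⟨hφ0, hφπ⟩).mono (Set.Icc_subset_Icc le_rfl hφπ.le))
      (fun x hx => (Gderiv ⟨hφ0, hφπ⟩ ⟨hx.1, lt_trans hx.2 hφπ⟩ (ne_of_lt hx.2)).hasDerivWithinAt)
      iiB1
  have hI2 : ∫ θ in φ..π, Real.log |Real.cos θ - Real.cos φ| * Real.cos θ
      = Gaux φ π - Gaux φ φ := by
    apply intervalIntegral.integral_eq_sub_of_hasDeriv_right_of_le hφπ.le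
      ((Gcont ⟨hφ0, hφπ⟩).mono (Set.Icc_subset_Icc hφ0.le le_rfl))
      (fun x hx => (Gderiv ⟨hφ0, hφπ⟩ ⟨lt_trans hφ0 hx.1, hx.2⟩ (ne_of_gt hx.1)).hasDerivWithinAt)
      iiB2
  rw [← intervalIntegral.integral_add_adjacent_intervals iiB1 iiB2, hI1, hI2, Gval0, Gvalpi]
  ring

lemma cos_mem_Ioo {θ : ℝ} (hθ : θ ∈ Set.Ioo 0 π) : Real.cos θ ∈ Set.Ioo (-1:ℝ) 1 := by
  obtain ⟨h1, h2⟩ := hθ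
  constructor
  · have := Real.strictAntiOn_cos ⟨h1.le, h2.le⟩ ⟨Real.pi_pos.le, le_rfl⟩ h2
    simpa using this
  · have := Real.strictAntiOn_cos ⟨le_rfl, Real.pi_pos.le⟩ ⟨h1.le, h2.le⟩ h1
    simpa using this

lemma imageIoo : (fun θ : ℝ => 1 - Real.cos θ) '' Set.Ioo 0 π = Set.Ioo 0 2 := by
  ext s
  constructor
  · rintro ⟨θ, hθ, rfl⟩
    obtain ⟨h1, h2⟩ := cos_mem_Ioo hθ
    constructor <;> simp only <;> linarith
  · intro hs
    obtain ⟨h1, h2⟩ := hs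
    refine ⟨Real.arccos (1-s), ⟨?_, ?_⟩, ?_⟩
    · exact Real.arccos_pos.2 (by linarith)
    · exact (Real.arccos_le_pi _).lt_of_ne (fun h => by
        have := Real.arccos_eq_pi.mp h; linarith)
    · show 1 - Real.cos (Real.arccos (1-s)) = s
      rw [Real.cos_arccos (by linarith) (by linarith)]; ring

lemma cov (g : ℝ → ℝ) :
    ∫ s in Set.Ioo (0:ℝ) 2, g s = ∫ θ in Set.Ioo 0 π, |Real.sin θ| * g (1 - Real.cos θ) := by
  rw [← imageIoo,
    integral_image_eq_integral_abs_deriv_smul measurableSet_Ioo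
      (f' := fun θ => Real.sin θ)
      (fun x _ => by simpa using ((Real.hasDerivAt_cos x).const_sub 1).hasDerivWithinAt)
      (fun a ha b hb h => by
        apply Real.injOn_cos ⟨ha.1.le, ha.2.le⟩ ⟨hb.1.le, hb.2.le⟩
        have h' : 1 - Real.cos a = 1 - Real.cos b := h
        linarith) g]
  simp [smul_eq_mul]

lemma sqrt_simp {θ : ℝ} (hθ : θ ∈ Set.Ioo 0 π) :
    Real.sin θ * Real.sqrt ((2 - (1 - Real.cos θ)) / (1 - Real.cos θ)) = 1 + Real.cos θ := by
  obtain ⟨hc1, hc2⟩ := cos_mem_Ioo hθ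
  have hsin : Real.sin θ = Real.sqrt (1 - Real.cos θ ^ 2) :=
    Real.sin_eq_sqrt_one_sub_cos_sq hθ.1.le hθ.2.le
  have hne : (1:ℝ) - Real.cos θ ≠ 0 := by linarith
  rw [show 2 - (1 - Real.cos θ) = 1 + Real.cos θ by ring, hsin,
    ← Real.sqrt_mul (by nlinarith) _,
    show (1 - Real.cos θ ^ 2) * ((1 + Real.cos θ) / (1 - Real.cos θ)) = (1 + Real.cos θ)^2 by
      field_simp [hne]; ring]
  exact Real.sqrt_sq (by linarith)

end Helpers

theorem stmt17 :
    (∫ t in (0:ℝ)..2, (1 / Real.pi) * Real.sqrt ((2 - t) / t) = 1) ∧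
    ∃ C : ℝ, ∀ t ∈ Set.Ioo (0:ℝ) 2,
      (∫ s in (0:ℝ)..2, (-Real.log |t - s|) * ((1 / Real.pi) * Real.sqrt ((2 - s) / s))) + t
        = C := by
  have hπ := Real.pi_pos
  constructor
  · rw [intervalIntegral.integral_of_le (by norm_num : (0:ℝ) ≤ 2),
      MeasureTheory.integral_Ioc_eq_integral_Ioo,
      cov (fun t => (1 / Real.pi) * Real.sqrt ((2 - t) / t))]
    rw [MeasureTheory.setIntegral_congr_fun measurableSet_Ioo
      (g := fun θ => (1 / Real.pi) * (1 + Real.cos θ))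
      (fun θ hθ => by
        simp only
        rw [abs_of_nonneg (Real.sin_nonneg_of_nonneg_of_le_pi hθ.1.le hθ.2.le)]
        rw [mul_comm (1/Real.pi) _, ← mul_assoc, sqrt_simp hθ, mul_comm]
        )]
    rw [← MeasureTheory.integral_Ioc_eq_integral_Ioo,
      ← intervalIntegral.integral_of_le Real.pi_pos.le,
      intervalIntegral.integral_const_mul,
      intervalIntegral.integral_add intervalIntegrable_const intervalIntegrable_cos,
      intervalIntegral.integral_const, integral_cos]
    simp
  · refine ⟨1 + Real.log 2, fun t ht => ?_⟩
    obtain ⟨ht0, ht2⟩ := ht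
    set φ := Real.arccos (1 - t) with hφdef
    have hφ : φ ∈ Set.Ioo 0 π :=
      ⟨Real.arccos_pos.2 (by linarith), (Real.arccos_le_pi _).lt_of_ne (fun h => by
        have := Real.arccos_eq_pi.mp h; linarith)⟩
    have hcosφ : Real.cos φ = 1 - t := Real.cos_arccos (by linarith) (by linarith)
    have key : ∫ s in (0:ℝ)..2, (-Real.log |t - s|) * ((1 / Real.pi) * Real.sqrt ((2 - s) / s))
        = Real.log 2 + Real.cos φ := by
      rw [intervalIntegral.integral_of_le (by norm_num : (0:ℝ) ≤ 2),
        MeasureTheory.integral_Ioc_eq_integral_Ioo,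
        cov (fun s => (-Real.log |t - s|) * ((1 / Real.pi) * Real.sqrt ((2 - s) / s)))]
      rw [MeasureTheory.setIntegral_congr_fun measurableSet_Ioo
        (g := fun θ => (1/Real.pi) * (-(Real.log |Real.cos θ - Real.cos φ|
            + Real.log |Real.cos θ - Real.cos φ| * Real.cos θ)))
        (fun θ hθ => by
          simp only
          rw [abs_of_nonneg (Real.sin_nonneg_of_nonneg_of_le_pi hθ.1.le hθ.2.le)]
          rw [show t - (1 - Real.cos θ) = Real.cos θ - Real.cos φ by rw [hcosφ]; ring]
          rw [show Real.sin θ * (-Real.log |Real.cos θ - Real.cos φ|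
              * ((1 / Real.pi) * Real.sqrt ((2 - (1 - Real.cos θ)) / (1 - Real.cos θ))))
            = -Real.log |Real.cos θ - Real.cos φ| * ((1/Real.pi)
              * (Real.sin θ * Real.sqrt ((2 - (1 - Real.cos θ)) / (1 - Real.cos θ)))) by ring]
          rw [sqrt_simp hθ]
          ring)]
      rw [← MeasureTheory.integral_Ioc_eq_integral_Ioo,
        ← intervalIntegral.integral_of_le Real.pi_pos.le,
        intervalIntegral.integral_const_mul,
        intervalIntegral.integral_neg,
        intervalIntegral.integral_add (iiA hφ)
          ((iiA hφ).mul_continuousOn Real.continuous_cos.continuousOn),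
        intA hφ, intB hφ]
      field_simp
      ring
    rw [key, hcosφ]
    ring
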